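/- arXiv:2503.17888 — 2 statements merged into one kernel-verified Lean document; each statement's English description precedes it below -/
import Mathlib

section
/- Let (η_i)_{i∈ℤ} be a strictly stationary sequence of mean-zero real random variables with finite-range dependence of range M, and suppose |η_i| ≤ α almost surely. Then for every even integer exponent 2p and all t > s ≥ 0 integers, E[(Σ_{r=s}^{t} η_r)^{2p}] ≤ C_p (t-s)^p for a constant C_p depending only on p, M, α. -/
open MeasureTheory ProbabilityTheory Finset

lemma not_isolated_aux {m : ℕ} {g : Fin m → ℤ} {M : ℤ}
    (hgood : ∀ i : Fin m, ∃ j, j ≠ i ∧ |g i - g j| ≤ M)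
    (σ : Equiv.Perm (Fin m)) (k : Fin m)
    (hl : ∀ l, l < k → M < g (σ k) - g (σ l))
    (hr : ∀ l, k < l → M < g (σ l) - g (σ k)) : False := by
  obtain ⟨j, hj, hjle⟩ := hgood (σ k)
  have hlk : σ.symm j ≠ k := by
    intro h
    apply hj
    rw [← h, Equiv.apply_symm_apply]
  rcases lt_or_gt_of_ne hlk with h | h
  · have := hl _ h
    rw [Equiv.apply_symm_apply] at this
    rw [abs_le] at hjle
    omega
  · have := hr _ h
    rw [Equiv.apply_symm_apply] at this
    rw [abs_le] at hjle
    omega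

/-- value function: sorted values, extended by 0 -/
noncomputable def vfun {m : ℕ} (g : Fin m → ℤ) (j : ℕ) : ℤ :=
  if h : j < m then g (Tuple.sort g ⟨j, h⟩) else 0

/-- increment encoding -/
noncomputable def wfun {m : ℕ} (g : Fin m → ℤ) (k : Fin m) : ℤ :=
  vfun g k.1 - (if k.1 = 0 then 0 else vfun g (k.1 - 1))

lemma vfun_eq {m : ℕ} (g : Fin m → ℤ) {j : ℕ} (h : j < m) :
    vfun g j = g (Tuple.sort g ⟨j, h⟩) := dif_pos h

lemma vfun_mono {m : ℕ} (g : Fin m → ℤ) {j1 j2 : ℕ} (h : j1 ≤ j2) (h2 : j2 < m) :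
    vfun g j1 ≤ vfun g j2 := by
  rw [vfun_eq g (lt_of_le_of_lt h h2), vfun_eq g h2]
  exact Tuple.monotone_sort g (by rw [Fin.mk_le_mk]; exact h)

/-- if there are big gaps on both sides of position k, g is not good -/
lemma gap_not_good {m : ℕ} {g : Fin m → ℤ} {M : ℤ}
    (hgood : ∀ i : Fin m, ∃ j, j ≠ i ∧ |g i - g j| ≤ M)
    {k : ℕ} (hk : k < m)
    (hl : k = 0 ∨ M < vfun g k - vfun g (k - 1))
    (hr : k = m - 1 ∨ M < vfun g (k + 1) - vfun g k) : False := by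
  refine not_isolated_aux hgood (Tuple.sort g) ⟨k, hk⟩ ?_ ?_
  · intro l hl'
    rw [Fin.lt_def] at hl'
    simp only at hl'
    rcases hl with h0 | hgap
    · omega
    · have h1 : vfun g l.1 ≤ vfun g (k - 1) := vfun_mono g (by omega) (by omega)
      rw [vfun_eq g l.2] at h1
      rw [vfun_eq g hk] at hgap
      simp only [Fin.eta] at h1
      omega
  · intro l hl'
    rw [Fin.lt_def] at hl'
    simp only at hl'
    rcases hr with h0 | hgap
    · exfalso; have := l.2; omega
    · have h1 : vfun g (k + 1) ≤ vfun g l.1 := vfun_mono g (by omega) l.2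
      rw [vfun_eq g l.2] at h1
      rw [vfun_eq g hk] at hgap
      simp only [Fin.eta] at h1
      omega


lemma count_W (p M : ℕ) (hp : 0 < p) (s t : ℤ) (hst : s < t) :
    ((Fintype.piFinset (fun k : Fin (2*p) => if k.1 = 0 then Finset.Icc s t
        else Finset.Icc 0 (t-s))).filter
      (fun u => (Finset.univ.filter (fun k : Fin (2*p) => k.1 ≠ 0 ∧ (M:ℤ) < u k)).card ≤ p - 1)).card
    ≤ 2^(2*p) * ((2*(M+1))^(2*p) * (t-s).toNat ^ p) := by
  classical
  set m := 2*p with hm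
  set n := (t-s).toNat with hn
  have hn1 : 1 ≤ n := by omega
  set W : Finset (Fin m → ℤ) :=
    (Fintype.piFinset (fun k : Fin m => if k.1 = 0 then Finset.Icc s t else Finset.Icc 0 (t-s))).filter
      (fun u => (Finset.univ.filter (fun k : Fin m => k.1 ≠ 0 ∧ (M:ℤ) < u k)).card ≤ p - 1) with hW
  show W.card ≤ 2^m * ((2*(M+1))^m * n ^ p)
  have hsub : W ⊆ ((Finset.univ : Finset (Finset (Fin m))).filter
      (fun L => L.card ≤ p - 1)).biUnion
      (fun L => Fintype.piFinset (fun k : Fin m =>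
        if k.1 = 0 then Finset.Icc s t else if k ∈ L then Finset.Icc (M+1:ℤ) (t-s)
        else Finset.Icc (0:ℤ) (M:ℤ))) := by
    intro u hu
    rw [hW, Finset.mem_filter] at hu
    obtain ⟨humem, hucard⟩ := hu
    rw [Fintype.mem_piFinset] at humem
    rw [Finset.mem_biUnion]
    refine ⟨Finset.univ.filter (fun k : Fin m => k.1 ≠ 0 ∧ (M:ℤ) < u k), ?_, ?_⟩
    · rw [Finset.mem_filter]
      exact ⟨Finset.mem_univ _, hucard⟩
    · rw [Fintype.mem_piFinset]
      intro k
      have hk := humem k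
      split_ifs with h0 hL
      · rwa [if_pos h0] at hk
      · rw [if_neg h0] at hk
        rw [Finset.mem_filter] at hL
        have := hL.2.2
        rw [Finset.mem_Icc] at hk ⊢
        omega
      · rw [if_neg h0] at hk
        have hnotM : ¬ ((M:ℤ) < u k) := fun hMk =>
          hL (Finset.mem_filter.mpr ⟨Finset.mem_univ _, h0, hMk⟩)
        rw [Finset.mem_Icc] at hk ⊢
        omega
  refine le_trans (Finset.card_le_card hsub) (le_trans Finset.card_biUnion_le ?_)
  have hBL : ∀ L ∈ (Finset.univ : Finset (Finset (Fin m))).filter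
      (fun L => L.card ≤ p - 1),
      (Fintype.piFinset (fun k : Fin m =>
        if k.1 = 0 then Finset.Icc s t else if k ∈ L then Finset.Icc (M+1:ℤ) (t-s)
        else Finset.Icc (0:ℤ) (M:ℤ))).card ≤ (2*(M+1))^m * n ^ p := by
    intro L hL
    rw [Finset.mem_filter] at hL
    obtain ⟨-, hLcard⟩ := hL
    rw [Fintype.card_piFinset]
    have hfac : ∀ k : Fin m, (if k.1 = 0 then Finset.Icc s t
        else if k ∈ L then Finset.Icc (M+1:ℤ) (t-s)
        else Finset.Icc (0:ℤ) (M:ℤ)).card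
        ≤ (2*(M+1)) * n ^ (if k.1 = 0 ∨ k ∈ L then 1 else 0) := by
      intro k
      by_cases h0 : k.1 = 0
      · rw [if_pos h0, if_pos (Or.inl h0), pow_one, Int.card_Icc]
        have h1 : (t + 1 - s).toNat ≤ 2 * n := by omega
        refine le_trans h1 ?_
        exact Nat.mul_le_mul_right n (show 2 ≤ 2*(M+1) by omega)
      · rw [if_neg h0]
        by_cases hkL : k ∈ L
        · rw [if_pos hkL, if_pos (Or.inr hkL), pow_one, Int.card_Icc]
          have h1 : (t - s + 1 - (M+1:ℤ)).toNat ≤ n := by omega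
          refine le_trans h1 ?_
          calc n = 1 * n := (one_mul n).symm
          _ ≤ (2*(M+1)) * n := Nat.mul_le_mul_right n (show 1 ≤ 2*(M+1) by omega)
        · rw [if_neg hkL, if_neg (by tauto), pow_zero, mul_one, Int.card_Icc]
          omega
    calc (∏ k : Fin m, (if k.1 = 0 then Finset.Icc s t
        else if k ∈ L then Finset.Icc (M+1:ℤ) (t-s)
        else Finset.Icc (0:ℤ) (M:ℤ)).card)
        ≤ ∏ k : Fin m, (2*(M+1)) * n ^ (if k.1 = 0 ∨ k ∈ L then 1 else 0) :=
          Finset.prod_le_prod' (fun k _ => hfac k)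
      _ = (2*(M+1))^m * n ^ (∑ k : Fin m, if k.1 = 0 ∨ k ∈ L then 1 else 0) := by
          rw [Finset.prod_mul_distrib, Finset.prod_const, Finset.prod_pow_eq_pow_sum]
          simp
      _ ≤ (2*(M+1))^m * n ^ p := by
          apply Nat.mul_le_mul_left
          apply Nat.pow_le_pow_right hn1
          rw [← Finset.card_filter]
          have hsub2 : Finset.univ.filter (fun k : Fin m => k.1 = 0 ∨ k ∈ L)
              ⊆ insert (⟨0, by omega⟩ : Fin m) L := by
            intro k hk
            rw [Finset.mem_filter] at hk
            rcases hk.2 with h0 | hkL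
            · exact Finset.mem_insert.mpr (Or.inl (Fin.ext h0))
            · exact Finset.mem_insert.mpr (Or.inr hkL)
          refine le_trans (Finset.card_le_card hsub2) (le_trans (Finset.card_insert_le _ _) ?_)
          omega
  refine le_trans (Finset.sum_le_sum hBL) ?_
  rw [Finset.sum_const, smul_eq_mul]
  apply Nat.mul_le_mul_right
  calc ((Finset.univ : Finset (Finset (Fin m))).filter (fun L => L.card ≤ p - 1)).card
      ≤ (Finset.univ : Finset (Finset (Fin m))).card := Finset.card_le_card (Finset.filter_subset _ _)
    _ = 2 ^ m := by rw [Finset.card_univ, Fintype.card_finset, Fintype.card_fin]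

lemma count_good (p M : ℕ) (hp : 0 < p) (s t : ℤ) (hst : s < t) :
    ((Fintype.piFinset (fun _ : Fin (2*p) => Finset.Icc s t)).filter
       (fun g => ∀ i, ∃ j, j ≠ i ∧ |g i - g j| ≤ (M:ℤ))).card
    ≤ (2*p).factorial * 2^(2*p) * (2*(M+1))^(2*p) * (t - s).toNat ^ p := by
  classical
  set m := 2*p with hm
  set n := (t-s).toNat with hn
  have hn1 : 1 ≤ n := by omega
  set W : Finset (Fin m → ℤ) :=
    (Fintype.piFinset (fun k : Fin m => if k.1 = 0 then Finset.Icc s t else Finset.Icc 0 (t-s))).filter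
      (fun u => (Finset.univ.filter (fun k : Fin m => k.1 ≠ 0 ∧ (M:ℤ) < u k)).card ≤ p - 1) with hW
  have step1 : ((Fintype.piFinset (fun _ : Fin m => Finset.Icc s t)).filter
       (fun g => ∀ i, ∃ j, j ≠ i ∧ |g i - g j| ≤ (M:ℤ))).card
      ≤ ((Finset.univ : Finset (Equiv.Perm (Fin m))) ×ˢ W).card := by
    apply Finset.card_le_card_of_injOn (fun g => (Tuple.sort g, wfun g))
    · -- maps into
      intro g hg
      rw [Finset.mem_coe] at hg ⊢
      rw [Finset.mem_filter] at hg
      obtain ⟨hgmem, hggood⟩ := hg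
      rw [Fintype.mem_piFinset] at hgmem
      rw [Finset.mem_product]
      refine ⟨Finset.mem_univ _, ?_⟩
      show wfun g ∈ W
      rw [hW, Finset.mem_filter]
      constructor
      · rw [Fintype.mem_piFinset]
        intro k
        have hmem : ∀ j (h : j < m), vfun g j ∈ Finset.Icc s t := by
          intro j h; rw [vfun_eq g h]; exact hgmem _
        by_cases h0 : k.1 = 0
        · rw [if_pos h0]
          unfold wfun
          rw [if_pos h0]
          have := hmem k.1 k.2
          rw [Finset.mem_Icc] at this ⊢
          omega
        · rw [if_neg h0]
          unfold wfun
          rw [if_neg h0]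
          have h1 := hmem k.1 k.2
          have h2 := hmem (k.1 - 1) (by omega)
          have h3 := vfun_mono g (show k.1 - 1 ≤ k.1 by omega) k.2
          rw [Finset.mem_Icc] at h1 h2 ⊢
          omega
      · -- gap count ≤ p - 1
        have hcard : (Finset.Icc 1 (p-1)).card = p - 1 := by
          rw [Nat.card_Icc]; omega
        rw [← hcard]
        apply Finset.card_le_card_of_injOn (fun k : Fin m => k.1 / 2)
        · intro k hk
          rw [Finset.mem_coe] at hk ⊢
          rw [Finset.mem_filter] at hk
          obtain ⟨-, hk0, hkM⟩ := hk
          unfold wfun at hkM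
          rw [if_neg hk0] at hkM
          have hk1 : k.1 ≠ 1 := by
            intro h1
            exact gap_not_good hggood (show 0 < m by omega)
              (Or.inl rfl) (Or.inr (by rw [h1] at hkM; simpa using hkM))
          have hkm : k.1 ≠ m - 1 := by
            intro h1
            exact gap_not_good hggood k.2 (Or.inr hkM) (Or.inl h1)
          have := k.2
          rw [Finset.mem_Icc]
          beta_reduce
          omega
        · intro k1 hk1 k2 hk2 hdiv
          simp only [Finset.coe_filter, Set.mem_setOf_eq, Finset.mem_univ, true_and] at hk1 hk2
          by_contra hne
          have hne' : k1.1 ≠ k2.1 := fun h => hne (Fin.ext h)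
          have hadj : ∀ a b : Fin m, a.1 ≠ 0 ∧ (M:ℤ) < wfun g a → b.1 ≠ 0 ∧ (M:ℤ) < wfun g b →
              b.1 = a.1 + 1 → False := by
            rintro a b ⟨ha0, haM⟩ ⟨hb0, hbM⟩ hab
            unfold wfun at haM hbM
            rw [if_neg ha0] at haM
            rw [if_neg hb0] at hbM
            refine gap_not_good hggood a.2 (Or.inr haM) (Or.inr ?_)
            rw [hab] at hbM
            simpa using hbM
          simp only [Fin.lt_def] at hdiv
          rcases Nat.lt_or_ge k1.1 k2.1 with h | h
          · exact hadj k1 k2 hk1 hk2 (by omega)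
          · exact hadj k2 k1 hk2 hk1 (by omega)
    · -- injectivity
      intro g1 hg1 g2 hg2 henc
      simp only [Prod.mk.injEq] at henc
      obtain ⟨hσ, hwe⟩ := henc
      have hveq : ∀ kn, kn < m → vfun g1 kn = vfun g2 kn := by
        intro kn
        induction kn with
        | zero =>
          intro hk
          have h1 := congrFun hwe (⟨0, hk⟩ : Fin m)
          unfold wfun at h1
          simpa using h1
        | succ nn ih =>
          intro hk
          have h1 := congrFun hwe (⟨nn+1, hk⟩ : Fin m)
          unfold wfun at h1
          simp only [if_neg (Nat.succ_ne_zero nn)] at h1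
          have h2 := ih (by omega)
          simp only [Nat.add_sub_cancel] at h1
          omega
      funext i
      have e1 : g1 i = vfun g1 ((Tuple.sort g1).symm i).1 := by
        rw [vfun_eq g1 ((Tuple.sort g1).symm i).2]
        simp
      have e2 : g2 i = vfun g2 ((Tuple.sort g1).symm i).1 := by
        rw [vfun_eq g2 ((Tuple.sort g1).symm i).2]
        rw [hσ]
        simp
      rw [e1, e2, hveq _ ((Tuple.sort g1).symm i).2]
  have step2 := count_W p M hp s t hst
  calc ((Fintype.piFinset (fun _ : Fin m => Finset.Icc s t)).filter
       (fun g => ∀ i, ∃ j, j ≠ i ∧ |g i - g j| ≤ (M:ℤ))).card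
      ≤ ((Finset.univ : Finset (Equiv.Perm (Fin m))) ×ˢ W).card := step1
    _ = m.factorial * W.card := by
        rw [Finset.card_product, Finset.card_univ, Fintype.card_perm, Fintype.card_fin]
    _ ≤ m.factorial * (2^m * ((2*(M+1))^m * n ^ p)) := Nat.mul_le_mul_left _ step2
    _ = m.factorial * 2^m * (2*(M+1))^m * n ^ p := by ring

section Analysis
variable {Ω : Type*} [MeasureSpace Ω] [IsProbabilityMeasure (ℙ : Measure Ω)]
  (η : ℤ → Ω → ℝ) (α : ℝ)

lemma prod_eta_bound (hmeas : ∀ i, Measurable (η i)) (hbdd : ∀ i, ∀ᵐ ω ∂ℙ, |η i ω| ≤ α)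
    {κ : Type*} [DecidableEq κ] (u : Finset κ) (g : κ → ℤ) :
    Integrable (fun ω => ∏ j ∈ u, η (g j) ω) ℙ ∧
      |∫ ω, ∏ j ∈ u, η (g j) ω ∂ℙ| ≤ α ^ u.card := by
  have hae : ∀ᵐ ω ∂ℙ, ∀ j ∈ u, |η (g j) ω| ≤ α :=
    (ae_ball_iff u.countable_toSet).mpr (fun j _ => hbdd (g j))
  have habs : ∀ᵐ ω ∂ℙ, |∏ j ∈ u, η (g j) ω| ≤ α ^ u.card := by
    filter_upwards [hae] with ω hω
    rw [Finset.abs_prod]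
    calc ∏ j ∈ u, |η (g j) ω| ≤ ∏ j ∈ u, α :=
          Finset.prod_le_prod (fun j _ => abs_nonneg _) hω
      _ = α ^ u.card := Finset.prod_const α
  have hm : Measurable (fun ω => ∏ j ∈ u, η (g j) ω) :=
    Finset.measurable_prod u (fun j _ => hmeas (g j))
  have hint : Integrable (fun ω => ∏ j ∈ u, η (g j) ω) ℙ := by
    refine Integrable.mono' (integrable_const (α ^ u.card)) hm.aestronglyMeasurable ?_
    filter_upwards [habs] with ω hω
    rwa [Real.norm_eq_abs]
  refine ⟨hint, ?_⟩
  calc |∫ ω, ∏ j ∈ u, η (g j) ω ∂ℙ| ≤ ∫ ω, |∏ j ∈ u, η (g j) ω| ∂ℙ := by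
        simp only [Finset.abs_prod]
        simpa [Real.norm_eq_abs] using
          norm_integral_le_integral_norm (μ := (ℙ : Measure Ω)) (fun ω => ∏ j ∈ u, η (g j) ω)
    _ ≤ ∫ _ω, α ^ u.card ∂ℙ := integral_mono_ae hint.abs (integrable_const _) habs
    _ = α ^ u.card := by simp

lemma bad_integral_zero (hmeas : ∀ i, Measurable (η i)) (hbdd : ∀ i, ∀ᵐ ω ∂ℙ, |η i ω| ≤ α)
    (hmean : ∀ i, ∫ ω, η i ω ∂ℙ = 0)
    (hindep : ∀ A B : Set ℤ, (∀ i ∈ A, ∀ j ∈ B, (M : ℤ) < |i - j|) →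
      Indep (⨆ i ∈ A, MeasurableSpace.comap (η i) inferInstance)
            (⨆ j ∈ B, MeasurableSpace.comap (η j) inferInstance) ℙ)
    {m : ℕ} (g : Fin m → ℤ) (i : Fin m)
    (hiso : ∀ j, j ≠ i → (M : ℤ) < |g i - g j|) :
    ∫ ω, ∏ j, η (g j) ω ∂ℙ = 0 := by
  classical
  set A : Set ℤ := {g i} with hA
  set B : Set ℤ := {x | ∃ j, j ≠ i ∧ g j = x} with hB
  have hAB : ∀ a ∈ A, ∀ b ∈ B, (M : ℤ) < |a - b| := by
    rintro a ha b ⟨j, hj, rfl⟩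
    rw [hA, Set.mem_singleton_iff] at ha
    subst ha
    exact hiso j hj
  have hI := hindep A B hAB
  have le1 : MeasurableSpace.comap (η (g i)) inferInstance
      ≤ ⨆ a ∈ A, MeasurableSpace.comap (η a) inferInstance :=
    le_biSup (fun a => MeasurableSpace.comap (η a) inferInstance) (Set.mem_singleton (g i))
  have le2 : MeasurableSpace.comap (fun ω => ∏ j ∈ Finset.univ.erase i, η (g j) ω) inferInstance
      ≤ ⨆ b ∈ B, MeasurableSpace.comap (η b) inferInstance := by
    apply Measurable.comap_le
    refine Finset.measurable_prod _ (fun j hj => ?_)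
    refine Measurable.of_comap_le ?_
    exact le_biSup (fun b => MeasurableSpace.comap (η b) inferInstance)
      ⟨j, (Finset.mem_erase.mp hj).1, rfl⟩
  have hIF : IndepFun (η (g i)) (fun ω => ∏ j ∈ Finset.univ.erase i, η (g j) ω) ℙ :=
    (IndepFun_iff_Indep _ _ _).mpr
      (indep_of_indep_of_le_right (indep_of_indep_of_le_left hI le1) le2)
  have int1 : Integrable (η (g i)) ℙ := by
    have := prod_eta_bound η α hmeas hbdd {i} g
    simpa using this.1
  have int2 : Integrable (fun ω => ∏ j ∈ Finset.univ.erase i, η (g j) ω) ℙ :=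
    (prod_eta_bound η α hmeas hbdd _ g).1
  have hsplit : (fun ω => ∏ j, η (g j) ω)
      = fun ω => η (g i) ω * ∏ j ∈ Finset.univ.erase i, η (g j) ω := by
    funext ω
    exact (Finset.mul_prod_erase Finset.univ (fun j => η (g j) ω) (Finset.mem_univ i)).symm
  rw [hsplit]
  have h2 := hIF.integral_fun_mul_eq_mul_integral int1.aestronglyMeasurable int2.aestronglyMeasurable
  have h3 : ∫ ω, η (g i) ω * ∏ j ∈ Finset.univ.erase i, η (g j) ω ∂ℙ
      = (∫ ω, η (g i) ω ∂ℙ) * ∫ ω, ∏ j ∈ Finset.univ.erase i, η (g j) ω ∂ℙ := h2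
  rw [h3, hmean (g i), zero_mul]

end Analysis

/-- For a strictly stationary, mean-zero, a.s.-bounded sequence with
finite-range dependence of range `M` (independence of σ-algebras over index sets at
distance `> M`), every even moment of a partial sum over `[s,t]` is `≤ C_p (t-s)^p`. -/
theorem stmt1 {Ω : Type*} [MeasureSpace Ω] [IsProbabilityMeasure (ℙ : Measure Ω)]
    (η : ℤ → Ω → ℝ) (M : ℕ) (α : ℝ)
    (hmeas : ∀ i, Measurable (η i))
    (hstat : ∀ k : ℤ, Measure.map (fun ω (i : ℤ) => η (i + k) ω) ℙ
      = Measure.map (fun ω (i : ℤ) => η i ω) ℙ)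
    (hbdd : ∀ i, ∀ᵐ ω ∂ℙ, |η i ω| ≤ α)
    (hmean : ∀ i, ∫ ω, η i ω ∂ℙ = 0)
    (hindep : ∀ A B : Set ℤ, (∀ i ∈ A, ∀ j ∈ B, (M : ℤ) < |i - j|) →
      Indep (⨆ i ∈ A, MeasurableSpace.comap (η i) inferInstance)
            (⨆ j ∈ B, MeasurableSpace.comap (η j) inferInstance) ℙ) :
    ∀ p : ℕ, ∃ C : ℝ, ∀ s t : ℕ, s < t →
      ∫ ω, (∑ r ∈ Finset.Icc (s : ℤ) (t : ℤ), η r ω) ^ (2 * p) ∂ℙ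
        ≤ C * ((t : ℝ) - (s : ℝ)) ^ p := by
  intro p
  by_cases hp0 : p = 0
  · refine ⟨1, fun s t hst => ?_⟩
    subst hp0
    simp
  have hp : 0 < p := Nat.pos_of_ne_zero hp0
  have hα : 0 ≤ α := by
    obtain ⟨ω, hω⟩ := (hbdd 0).exists
    exact le_trans (abs_nonneg _) hω
  refine ⟨(((2*p).factorial * 2^(2*p) * (2*(M+1))^(2*p) : ℕ) : ℝ) * α^(2*p),
    fun s t hst => ?_⟩
  classical
  have hst' : (s:ℤ) < (t:ℤ) := by exact_mod_cast hst
  have hcast : ((((t:ℤ)-(s:ℤ)).toNat : ℕ) : ℝ) = (t:ℝ) - (s:ℝ) := by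
    have h3 : ((t:ℤ)-(s:ℤ)).toNat = t - s := by omega
    rw [h3]
    push_cast [Nat.cast_sub (le_of_lt hst)]
    ring
  set pile := Fintype.piFinset (fun _ : Fin (2*p) => Finset.Icc (s:ℤ) (t:ℤ)) with hpile
  have hexp : ∫ ω, (∑ r ∈ Finset.Icc (s:ℤ) (t:ℤ), η r ω) ^ (2*p) ∂ℙ
      = ∑ g ∈ pile, ∫ ω, ∏ i, η (g i) ω ∂ℙ := by
    have h1 : ∀ ω, (∑ r ∈ Finset.Icc (s:ℤ) (t:ℤ), η r ω) ^ (2*p)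
        = ∑ g ∈ pile, ∏ i, η (g i) ω := fun ω => Finset.sum_pow' _ _ _
    rw [integral_congr_ae (Filter.Eventually.of_forall h1)]
    exact integral_finset_sum _ (fun g _ => (prod_eta_bound η α hmeas hbdd _ g).1)
  rw [hexp]
  have hsplit := Finset.sum_filter_add_sum_filter_not pile
    (fun g => ∀ i, ∃ j, j ≠ i ∧ |g i - g j| ≤ (M:ℤ)) (fun g => ∫ ω, ∏ i, η (g i) ω ∂ℙ)
  have hbadzero : ∑ g ∈ pile.filter
      (fun g => ¬ ∀ i, ∃ j, j ≠ i ∧ |g i - g j| ≤ (M:ℤ)), ∫ ω, ∏ i, η (g i) ω ∂ℙ = 0 := by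
    apply Finset.sum_eq_zero
    intro g hg
    rw [Finset.mem_filter] at hg
    have hg2 := hg.2
    push_neg at hg2
    obtain ⟨i, hi⟩ := hg2
    exact bad_integral_zero η α hmeas hbdd hmean hindep g i hi
  rw [← hsplit, hbadzero, add_zero]
  have hterm : ∀ g ∈ pile.filter (fun g => ∀ i, ∃ j, j ≠ i ∧ |g i - g j| ≤ (M:ℤ)),
      ∫ ω, ∏ i, η (g i) ω ∂ℙ ≤ α^(2*p) := by
    intro g _
    have h2 := (prod_eta_bound η α hmeas hbdd Finset.univ g).2
    rw [Finset.card_univ, Fintype.card_fin] at h2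
    exact le_trans (le_abs_self _) h2
  have hcount := count_good p M hp (s:ℤ) (t:ℤ) hst'
  calc ∑ g ∈ pile.filter (fun g => ∀ i, ∃ j, j ≠ i ∧ |g i - g j| ≤ (M:ℤ)),
        ∫ ω, ∏ i, η (g i) ω ∂ℙ
      ≤ ∑ _g ∈ pile.filter (fun g => ∀ i, ∃ j, j ≠ i ∧ |g i - g j| ≤ (M:ℤ)), α^(2*p) :=
        Finset.sum_le_sum hterm
    _ = ((pile.filter (fun g => ∀ i, ∃ j, j ≠ i ∧ |g i - g j| ≤ (M:ℤ))).card : ℝ) * α^(2*p) := by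
        rw [Finset.sum_const, nsmul_eq_mul]
    _ ≤ (((2*p).factorial * 2^(2*p) * (2*(M+1))^(2*p) * ((t:ℤ)-(s:ℤ)).toNat ^ p : ℕ) : ℝ)
          * α^(2*p) := by
        apply mul_le_mul_of_nonneg_right _ (pow_nonneg hα _)
        exact_mod_cast hcount
    _ = (((2*p).factorial * 2^(2*p) * (2*(M+1))^(2*p) : ℕ) : ℝ) * α^(2*p)
          * ((t : ℝ) - (s : ℝ)) ^ p := by
        push_cast
        rw [← hcast]
        push_cast
        ring
end

section
/- Let (M_t)_{t≥0} and (L_t)_{t≥0} be continuous adapted real-valued processes on a filtered probability space, both nondecreasing with M_0 = L_0 = 0, and suppose that M - L is a martingale. Then M_t = L_t for all t almost surely. -/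
open MeasureTheory
open scoped NNReal

open Filter Topology

section Helpers


lemma sq_sum_expand (a : ℕ → ℝ) (n : ℕ) :
    (∑ j ∈ Finset.range n, a j) ^ 2
      = ∑ j ∈ Finset.range n, (a j ^ 2 + 2 * ((∑ k ∈ Finset.range j, a k) * a j)) := by
  induction n with
  | zero => simp
  | succ n ih => rw [Finset.sum_range_succ, Finset.sum_range_succ (f := fun j => a j ^ 2 + _), ← ih]; ring

/-- max of successive increments -/
noncomputable def maxAbs (g : ℕ → ℝ) : ℕ → ℝ
  | 0 => 0
  | (k+1) => max (maxAbs g k) |g (k+1) - g k|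

lemma maxAbs_nonneg (g : ℕ → ℝ) (n : ℕ) : 0 ≤ maxAbs g n := by
  induction n with
  | zero => simp [maxAbs]
  | succ n ih => exact le_trans ih (le_max_left _ _) 

lemma le_maxAbs (g : ℕ → ℝ) {k n : ℕ} (h : k < n) : |g (k+1) - g k| ≤ maxAbs g n := by
  induction n with
  | zero => omega
  | succ n ih =>
      rcases Nat.lt_succ_iff_lt_or_eq.1 h with h' | h'
      · exact le_trans (ih h') (le_max_left _ _)
      · subst h'; exact le_max_right _ _

lemma maxAbs_le (g : ℕ → ℝ) {n : ℕ} {c : ℝ} (hc : 0 ≤ c)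
    (h : ∀ k < n, |g (k+1) - g k| ≤ c) : maxAbs g n ≤ c := by
  induction n with
  | zero => simpa [maxAbs]
  | succ n ih =>
      exact max_le (ih fun k hk => h k (hk.trans (Nat.lt_succ_self n)))
        (h n (Nat.lt_succ_self n))

noncomputable def grid (t : ℝ≥0) (n k : ℕ) : ℝ≥0 := (k : ℝ≥0) * t / (n : ℝ≥0)

lemma grid_zero (t : ℝ≥0) (n : ℕ) : grid t n 0 = 0 := by simp [grid]

lemma grid_last (t : ℝ≥0) {n : ℕ} (hn : 0 < n) : grid t n n = t := by
  have hne : (n : ℝ≥0) ≠ 0 := by exact_mod_cast hn.ne'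
  rw [grid, mul_comm, mul_div_assoc, div_self hne, mul_one]

lemma grid_mono (t : ℝ≥0) (n : ℕ) : Monotone (grid t n) := fun a b hab => by
  unfold grid
  have : (a : ℝ≥0) ≤ (b : ℝ≥0) := by exact_mod_cast hab
  gcongr

lemma grid_le (t : ℝ≥0) {n k : ℕ} (hn : 0 < n) (hk : k ≤ n) : grid t n k ≤ t := by
  have := grid_mono t n hk
  rwa [grid_last t hn] at this

lemma grid_dist (t : ℝ≥0) {n : ℕ} (hn : 0 < n) (k : ℕ) :
    dist (grid t n (k+1)) (grid t n k) = (t : ℝ) / n := by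
  rw [NNReal.dist_eq]
  unfold grid
  push_cast
  have hn' : (0:ℝ) < n := by exact_mod_cast hn
  rw [abs_of_nonneg]
  · ring
  · rw [sub_nonneg]
    have ht : (0:ℝ) ≤ t := t.coe_nonneg
    have h1 : ((k:ℝ)) * t / n ≤ ((k:ℝ)+1) * t / n := by
      gcongr
      linarith
    linarith

lemma measurable_maxAbs {Ω : Type*} [MeasurableSpace Ω] {g : ℕ → Ω → ℝ}
    (hg : ∀ k, Measurable (g k)) (n : ℕ) :
    Measurable (fun ω => maxAbs (fun k => g k ω) n) := by
  induction n with
  | zero => simpa [maxAbs] using measurable_const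
  | succ n ih =>
      show Measurable fun ω => max (maxAbs (fun k => g k ω) n) |g (n+1) ω - g n ω|
      exact ih.max (((hg (n+1)).sub (hg n)).abs)

lemma tendsto_maxAbs_grid {X : ℝ≥0 → ℝ} (hX : Continuous X) (t : ℝ≥0) :
    Tendsto (fun n => maxAbs (fun k => X (grid t n k)) n) atTop (𝓝 0) := by
  rw [Metric.tendsto_atTop]
  intro ε hε
  have hc : UniformContinuousOn X (Set.Icc 0 t) :=
    isCompact_Icc.uniformContinuousOn_of_continuous hX.continuousOn
  rw [Metric.uniformContinuousOn_iff] at hc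
  obtain ⟨δ, hδ, hδ'⟩ := hc (ε/2) (by linarith)
  refine ⟨⌈(t:ℝ)/δ⌉₊ + 1, fun n hn => ?_⟩
  have hn0 : 0 < n := lt_of_lt_of_le (Nat.succ_pos _) hn
  have hmesh : (t:ℝ)/n < δ := by
    have h1 : (t:ℝ)/δ < n := by
      calc (t:ℝ)/δ ≤ ⌈(t:ℝ)/δ⌉₊ := Nat.le_ceil _
        _ < n := by exact_mod_cast Nat.lt_of_succ_le hn
    rw [div_lt_iff₀ (by exact_mod_cast hn0)]
    rw [div_lt_iff₀ hδ] at h1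
    linarith [mul_comm δ (n:ℝ)]
  have key : maxAbs (fun k => X (grid t n k)) n ≤ ε/2 := by
    refine maxAbs_le _ (by linarith) fun k hk => ?_
    have h1 : grid t n (k+1) ∈ Set.Icc 0 t := ⟨zero_le, grid_le t hn0 hk⟩
    have h2 : grid t n k ∈ Set.Icc 0 t := ⟨zero_le, grid_le t hn0 hk.le⟩
    have := hδ' _ h1 _ h2 (by rw [grid_dist t hn0 k]; exact hmesh)
    rw [Real.dist_eq] at this
    exact this.le
  rw [Real.dist_0_eq_abs, abs_of_nonneg (maxAbs_nonneg _ _)]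
  linarith

end Helpers


section Aux
variable {Ω : Type*} {m : MeasurableSpace Ω} {μ : Measure Ω}
  [IsProbabilityMeasure μ] {𝒢 : Filtration ℝ≥0 m}

/-- bounded measurable functions are integrable -/
lemma bddInt {g : Ω → ℝ} (hg : AEStronglyMeasurable g μ) {C : ℝ}
    (h : ∀ ω, |g ω| ≤ C) : Integrable g μ :=
  (integrable_const C).mono' hg (Filter.Eventually.of_forall fun ω => by
    simpa [Real.norm_eq_abs] using h ω)

/-- orthogonality of martingale increments against bounded earlier-measurable functions -/
lemma mart_orth {X : ℝ≥0 → Ω → ℝ} (hX : Martingale X 𝒢 μ)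
    {s u : ℝ≥0} (hsu : s ≤ u) {h : Ω → ℝ} (hmeas : StronglyMeasurable[𝒢 s] h)
    {C : ℝ} (hbd : ∀ ω, |h ω| ≤ C) :
    ∫ ω, (X u ω - X s ω) * h ω ∂μ = 0 := by
  have hle : 𝒢 s ≤ m := 𝒢.le s
  have hmm : AEStronglyMeasurable h μ := (hmeas.mono hle).aestronglyMeasurable
  have hXu : Integrable (X u) μ := hX.integrable u
  have hXs : Integrable (X s) μ := hX.integrable s
  have hint_u : Integrable (fun ω => h ω * X u ω) μ :=
    hXu.bdd_mul hmm (c := C) (Filter.Eventually.of_forall (fun ω => by simpa [Real.norm_eq_abs] using hbd ω))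
  have hint_s : Integrable (fun ω => h ω * X s ω) μ :=
    hXs.bdd_mul hmm (c := C) (Filter.Eventually.of_forall (fun ω => by simpa [Real.norm_eq_abs] using hbd ω))
  have key : ∫ ω, h ω * X u ω ∂μ = ∫ ω, h ω * X s ω ∂μ := by
    have h1 : μ[fun ω => h ω * X u ω | 𝒢 s] =ᵐ[μ] fun ω => h ω * (μ[X u | 𝒢 s]) ω :=
      condExp_mul_of_stronglyMeasurable_left hmeas hint_u hXu
    have h2 : (fun ω => h ω * (μ[X u | 𝒢 s]) ω) =ᵐ[μ] fun ω => h ω * X s ω := by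
      filter_upwards [hX.condExp_ae_eq hsu] with ω hω
      rw [hω]
    calc ∫ ω, h ω * X u ω ∂μ = ∫ ω, (μ[fun ω => h ω * X u ω | 𝒢 s]) ω ∂μ :=
          (integral_condExp hle).symm
      _ = ∫ ω, h ω * X s ω ∂μ := integral_congr_ae (h1.trans h2)
  have : ∫ ω, (X u ω - X s ω) * h ω ∂μ
      = ∫ ω, h ω * X u ω ∂μ - ∫ ω, h ω * X s ω ∂μ := by
    rw [← integral_sub hint_u hint_s]
    exact integral_congr_ae (Filter.Eventually.of_forall fun ω => by ring)
  rw [this, key, sub_self]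

/-- submartingale-type bound for |X| against [0,1]-valued earlier-measurable weights -/
lemma mart_abs_le {X : ℝ≥0 → Ω → ℝ} (hX : Martingale X 𝒢 μ)
    {s u : ℝ≥0} (hsu : s ≤ u) {g : Ω → ℝ} (hmeas : StronglyMeasurable[𝒢 s] g)
    (hg0 : ∀ ω, 0 ≤ g ω) (hg1 : ∀ ω, g ω ≤ 1) :
    ∫ ω, g ω * |X s ω| ∂μ ≤ ∫ ω, g ω * |X u ω| ∂μ := by
  have hle : 𝒢 s ≤ m := 𝒢.le s
  have hmm : AEStronglyMeasurable g μ := (hmeas.mono hle).aestronglyMeasurable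
  have hXu : Integrable (X u) μ := hX.integrable u
  have hXs : Integrable (X s) μ := hX.integrable s
  have hbd : ∀ ω, ‖g ω‖ ≤ 1 := fun ω => by
    rw [Real.norm_eq_abs, abs_of_nonneg (hg0 ω)]; exact hg1 ω
  have habs : (fun ω => |X s ω|) ≤ᵐ[μ] μ[fun ω => |X u ω| | 𝒢 s] := by
    have h1 : μ[X u | 𝒢 s] ≤ᵐ[μ] μ[fun ω => |X u ω| | 𝒢 s] :=
      condExp_mono hXu hXu.abs (Filter.Eventually.of_forall fun ω => le_abs_self _)
    have h2 : μ[fun ω => -(X u ω) | 𝒢 s] ≤ᵐ[μ] μ[fun ω => |X u ω| | 𝒢 s] :=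
      condExp_mono hXu.neg hXu.abs (Filter.Eventually.of_forall fun ω => neg_le_abs _)
    have h3 : μ[fun ω => -(X u ω) | 𝒢 s] =ᵐ[μ] fun ω => -(μ[X u | 𝒢 s]) ω := condExp_neg (X u) _
    filter_upwards [h1, h2, h3, hX.condExp_ae_eq hsu] with ω e1 e2 e3 e4
    rw [← e4]
    rcases abs_cases ((μ[X u | 𝒢 s]) ω) with ⟨he, _⟩ | ⟨he, _⟩
    · rw [he]; exact e1
    · rw [he]; rw [e3] at e2; exact e2
  have hintu : Integrable (fun ω => g ω * |X u ω|) μ := hXu.abs.bdd_mul hmm (c := 1) (Filter.Eventually.of_forall hbd)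
  have hints : Integrable (fun ω => g ω * |X s ω|) μ := hXs.abs.bdd_mul hmm (c := 1) (Filter.Eventually.of_forall hbd)
  calc ∫ ω, g ω * |X s ω| ∂μ ≤ ∫ ω, g ω * (μ[fun ω => |X u ω| | 𝒢 s]) ω ∂μ := by
        refine integral_mono_ae hints (integrable_condExp.bdd_mul hmm (c := 1) (Filter.Eventually.of_forall hbd)) ?_
        filter_upwards [habs] with ω hω
        exact mul_le_mul_of_nonneg_left hω (hg0 ω)
    _ = ∫ ω, g ω * |X u ω| ∂μ := by
        have h1 : μ[fun ω => g ω * |X u ω| | 𝒢 s] =ᵐ[μ] fun ω => g ω * (μ[fun ω => |X u ω| | 𝒢 s]) ω :=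
          condExp_mul_of_stronglyMeasurable_left hmeas hintu hXu.abs
        rw [← integral_condExp hle (f := fun ω => g ω * |X u ω|)]
        exact (integral_congr_ae h1).symm


lemma core {X V : ℝ≥0 → Ω → ℝ}
    (hX : Martingale X 𝒢 μ)
    (hVad : ∀ s, StronglyMeasurable[𝒢 s] (V s))
    (hV0 : ∀ ω, V 0 ω = 0)
    (hVmono : ∀ ω, Monotone fun s => V s ω)
    (hX0 : ∀ ω, X 0 ω = 0)
    (hXV : ∀ (ω : Ω) {s u : ℝ≥0}, s ≤ u → |X u ω - X s ω| ≤ V u ω - V s ω)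
    (t : ℝ≥0) {K Q : ℝ} (hK : 0 < K) (hQ : 0 ≤ Q) {n : ℕ} (hn : 0 < n) :
    ∫ ω, (if V t ω < K then 1 else 0) * (X t ω)^2 ∂μ
      ≤ K * (∫ ω, min K (maxAbs (fun k => X (grid t n k) ω) n) ∂μ)
        + 2*K * ((∫ ω, min Q (maxAbs (fun k => X (grid t n k) ω) n) ∂μ)
          + ∫ ω, (if Q < V t ω then 1 else 0) * (K + |X t ω|) ∂μ) := by
  classical
  set d : ℕ → ℝ≥0 := grid t n with hd
  -- indicator functions
  set f : ℕ → Ω → ℝ := fun l ω => if ∀ j ≤ l, V (d j) ω < K then 1 else 0 with hf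
  set h : ℕ → Ω → ℝ := fun j ω => if K ≤ V (d (j+1)) ω then 1 else 0 with hh
  set q : ℕ → Ω → ℝ := fun j ω => if Q < V (d (j+1)) ω then 1 else 0 with hq
  set χ : Ω → ℝ := fun ω => if Q < V t ω then 1 else 0 with hχ
  set W : ℕ → Ω → ℝ := fun k ω => f (k+1) ω * (X (d (k+1)) ω - X (d k) ω) with hW
  set P : ℕ → Ω → ℝ := fun j ω => ∑ k ∈ Finset.range j, W k ω with hP
  set MA : Ω → ℝ := fun ω => maxAbs (fun k => X (d k) ω) n with hMA
  -- basic path facts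
  have hVnn : ∀ (s : ℝ≥0) ω, 0 ≤ V s ω := fun s ω => by
    simpa [hV0 ω] using hVmono ω (zero_le : (0:ℝ≥0) ≤ s)
  have hXabs : ∀ (s : ℝ≥0) ω, |X s ω| ≤ V s ω := fun s ω => by
    have := hXV ω (zero_le : (0:ℝ≥0) ≤ s); rw [hX0 ω, hV0 ω, sub_zero, sub_zero] at this; exact this
  have hDV : ∀ (k : ℕ) ω, |X (d (k+1)) ω - X (d k) ω| ≤ V (d (k+1)) ω - V (d k) ω :=
    fun k ω => hXV ω (grid_mono t n (Nat.le_succ k))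
  -- values of indicators
  have hf01 : ∀ l ω, f l ω = 0 ∨ f l ω = 1 := fun l ω => by
    simp only [hf]; split_ifs <;> simp
  have hf_one : ∀ l ω, f l ω = 1 ↔ ∀ j ≤ l, V (d j) ω < K := fun l ω => by
    simp only [hf]; split_ifs with hc
    · simpa using hc
    · simpa using hc
  have hf_nn : ∀ l ω, 0 ≤ f l ω := fun l ω => by rcases hf01 l ω with h' | h' <;> rw [h'] <;> norm_num
  have hf_le1 : ∀ l ω, f l ω ≤ 1 := fun l ω => by rcases hf01 l ω with h' | h' <;> rw [h'] <;> norm_num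
  have hf_anti1 : ∀ {k l : ℕ} (ω : Ω), k ≤ l → f l ω = 1 → f k ω = 1 := by
    intro k l ω hkl h1
    rw [hf_one] at h1 ⊢
    exact fun j hj => h1 j (hj.trans hkl)
  have hf_anti : ∀ {k l : ℕ} (ω : Ω), k ≤ l → f l ω ≤ f k ω := by
    intro k l ω hkl
    rcases hf01 l ω with h' | h'
    · rw [h']; exact hf_nn k ω
    · rw [h', hf_anti1 ω hkl h']
  have hh01 : ∀ j ω, h j ω = 0 ∨ h j ω = 1 := fun j ω => by
    simp only [hh]; split_ifs <;> simp
  have hq01 : ∀ j ω, q j ω = 0 ∨ q j ω = 1 := fun j ω => by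
    simp only [hq]; split_ifs <;> simp
  have hfh : ∀ j ω, f (j+1) ω = f j ω - f j ω * h j ω := by
    intro j ω
    simp only [hf, hh]
    by_cases h1 : ∀ j' ≤ j + 1, V (d j') ω < K
    · rw [if_pos h1, if_pos fun j' hj' => h1 j' (hj'.trans (Nat.le_succ j)),
        if_neg (not_le.2 (h1 (j+1) le_rfl))]
      ring
    · rw [if_neg h1]
      by_cases h2 : ∀ j' ≤ j, V (d j') ω < K
      · rw [if_pos h2, if_pos]
        · ring
        · by_contra hc
          push_neg at hc
          exact h1 fun j' hj' => by
            rcases Nat.lt_succ_iff_lt_or_eq.1 (Nat.lt_succ_of_le hj') with h' | h'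
            · exact h2 j' (Nat.lt_succ_iff.1 h')
            · subst h'; exact hc
      · rw [if_neg h2]; ring
  -- bounds on W
  have hWval : ∀ k ω, |W k ω| ≤ min K (V (d (k+1)) ω - V (d k) ω) := by
    intro k ω
    rcases hf01 (k+1) ω with h' | h'
    · rw [hW]; simp only [h', zero_mul, abs_zero]
      exact le_min hK.le (by
        have := hDV k ω; have := abs_nonneg (X (d (k+1)) ω - X (d k) ω); linarith)
    · rw [hW]; simp only [h', one_mul]
      refine le_min ?_ (hDV k ω)
      have h1 : V (d (k+1)) ω < K := (hf_one (k+1) ω).1 h' (k+1) le_rfl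
      have h2 : 0 ≤ V (d k) ω := hVnn _ ω
      have := hDV k ω
      linarith
  have hWbd : ∀ k ω, |W k ω| ≤ K := fun k ω => (hWval k ω).trans (min_le_left _ _)

  -- measurability package
  have hXsm : ∀ s : ℝ≥0, StronglyMeasurable (X s) := fun s => (hX.stronglyAdapted s).mono (𝒢.le s)
  have hVsm : ∀ s : ℝ≥0, StronglyMeasurable (V s) := fun s => (hVad s).mono (𝒢.le s)
  have hfset : ∀ l : ℕ, MeasurableSet[𝒢 (d l)] {ω | ∀ j ≤ l, V (d j) ω < K} := by
    intro l
    have he : {ω | ∀ j ≤ l, V (d j) ω < K} = ⋂ j ∈ Set.Iic l, {ω | V (d j) ω < K} := by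
      ext ω; simp
    rw [he]
    refine MeasurableSet.biInter (Set.to_countable _) fun j hj => ?_
    have hmeas : Measurable[𝒢 (d l)] (V (d j)) :=
      ((hVad (d j)).mono (𝒢.mono (grid_mono t n hj))).measurable
    exact measurableSet_lt hmeas measurable_const
  have hfsm𝒢 : ∀ l : ℕ, StronglyMeasurable[𝒢 (d l)] (f l) := by
    intro l
    have he : f l = Set.indicator {ω | ∀ j ≤ l, V (d j) ω < K} (fun _ => (1:ℝ)) := by
      funext ω
      by_cases hc : ∀ j ≤ l, V (d j) ω < K <;>
        simp [hf, hc, Set.indicator_apply]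
    rw [he]
    exact stronglyMeasurable_const.indicator (hfset l)
  have hfsm : ∀ l, StronglyMeasurable (f l) := fun l => (hfsm𝒢 l).mono (𝒢.le _)
  have hhsm𝒢 : ∀ j : ℕ, StronglyMeasurable[𝒢 (d (j+1))] (h j) := by
    intro j
    have he : h j = Set.indicator {ω | K ≤ V (d (j+1)) ω} (fun _ => (1:ℝ)) := by
      funext ω
      by_cases hc : K ≤ V (d (j+1)) ω <;> simp [hh, hc, Set.indicator_apply]
    rw [he]
    exact stronglyMeasurable_const.indicator
      (measurableSet_le measurable_const (hVad (d (j+1))).measurable)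
  have hhsm : ∀ j, StronglyMeasurable (h j) := fun j => (hhsm𝒢 j).mono (𝒢.le _)
  have hqsm𝒢 : ∀ j : ℕ, StronglyMeasurable[𝒢 (d (j+1))] (q j) := by
    intro j
    have he : q j = Set.indicator {ω | Q < V (d (j+1)) ω} (fun _ => (1:ℝ)) := by
      funext ω
      by_cases hc : Q < V (d (j+1)) ω <;> simp [hq, hc, Set.indicator_apply]
    rw [he]
    exact stronglyMeasurable_const.indicator
      (measurableSet_lt measurable_const (hVad (d (j+1))).measurable)
  have hqsm : ∀ j, StronglyMeasurable (q j) := fun j => (hqsm𝒢 j).mono (𝒢.le _)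
  have hχsm : StronglyMeasurable χ := by
    have he : χ = Set.indicator {ω | Q < V t ω} (fun _ => (1:ℝ)) := by
      funext ω
      by_cases hc : Q < V t ω <;> simp [hχ, hc, Set.indicator_apply]
    rw [he]
    exact stronglyMeasurable_const.indicator
      (measurableSet_lt measurable_const (hVsm t).measurable)
  have hWsm𝒢 : ∀ k : ℕ, StronglyMeasurable[𝒢 (d (k+1))] (W k) := fun k =>
    (hfsm𝒢 (k+1)).mul ((hX.stronglyAdapted (d (k+1))).sub
      ((hX.stronglyAdapted (d k)).mono (𝒢.mono (grid_mono t n (Nat.le_succ k)))))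
  have hWsm : ∀ k, StronglyMeasurable (W k) := fun k => (hWsm𝒢 k).mono (𝒢.le _)
  have hPsm𝒢 : ∀ j : ℕ, StronglyMeasurable[𝒢 (d j)] (P j) := by
    intro j
    rw [hP]
    refine Finset.stronglyMeasurable_fun_sum _ fun k hk => ?_
    exact (hWsm𝒢 k).mono (𝒢.mono (grid_mono t n (Nat.succ_le_of_lt (Finset.mem_range.1 hk))))
  have hPsm : ∀ j, StronglyMeasurable (P j) := fun j => (hPsm𝒢 j).mono (𝒢.le _)
  have hMAsm : StronglyMeasurable MA := by
    rw [hMA]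
    exact (measurable_maxAbs (fun k => (hXsm (d k)).measurable) n).stronglyMeasurable
  -- integrability package
  have hWint : ∀ k, Integrable (W k) μ := fun k =>
    bddInt (hWsm k).aestronglyMeasurable (hWbd k)
  have hPbd : ∀ (j : ℕ) ω, |P j ω| ≤ j * K := by
    intro j ω
    rw [hP]
    calc |∑ k ∈ Finset.range j, W k ω| ≤ ∑ k ∈ Finset.range j, |W k ω| :=
          Finset.abs_sum_le_sum_abs _ _
      _ ≤ ∑ _k ∈ Finset.range j, K := Finset.sum_le_sum fun k _ => hWbd k ω
      _ = j * K := by simp [Finset.sum_const, nsmul_eq_mul]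
  have hDint : ∀ j : ℕ, Integrable (fun ω => X (d (j+1)) ω - X (d j) ω) μ := fun j =>
    (hX.integrable _).sub (hX.integrable _)
  have hXtint : Integrable (X t) μ := hX.integrable t
  have hW2int : ∀ j, Integrable (fun ω => W j ω ^ 2) μ := by
    intro j
    refine bddInt ((hWsm j).measurable.pow_const 2).stronglyMeasurable.aestronglyMeasurable
      (C := K^2) fun ω => ?_
    rw [abs_of_nonneg (sq_nonneg _), ← sq_abs]
    exact pow_le_pow_left₀ (abs_nonneg _) (hWbd j ω) 2
  have hfhD_int : ∀ j, Integrable (fun ω => f j ω * h j ω * |X (d (j+1)) ω - X (d j) ω|) μ := by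
    intro j
    refine (hDint j).abs.bdd_mul
      (((hfsm j).mul (hhsm j)).aestronglyMeasurable) (c := 1) (Filter.Eventually.of_forall (fun ω => ?_))
    rw [Real.norm_eq_abs, abs_mul]
    rcases hf01 j ω with h0 | h0 <;> rcases hh01 j ω with g0 | g0 <;>
      simp [h0, g0]
  -- main per-j step
  have step_j : ∀ j, j < n → ∫ ω, (W j ω^2 + 2 * (P j ω * W j ω)) ∂μ
      ≤ ∫ ω, W j ω^2 ∂μ
        + 2*K * ∫ ω, f j ω * h j ω * |X (d (j+1)) ω - X (d j) ω| ∂μ := by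
    intro j hj
    have hPWint : Integrable (fun ω => P j ω * W j ω) μ := by
      refine bddInt ((hPsm j).mul (hWsm j)).aestronglyMeasurable (C := (j*K)*K) fun ω => ?_
      rw [abs_mul]
      exact mul_le_mul (hPbd j ω) (hWbd j ω) (abs_nonneg _)
        (by positivity)
    have hfirst_int : Integrable
        (fun ω => (X (d (j+1)) ω - X (d j) ω) * (P j ω * f j ω)) μ := by
      have hb : ∀ ω, ‖P j ω * f j ω‖ ≤ (j:ℝ)*K := by
        intro ω
        rw [Real.norm_eq_abs, abs_mul]
        calc |P j ω| * |f j ω| ≤ ((j:ℝ)*K) * 1 := by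
              refine mul_le_mul (hPbd j ω) ?_ (abs_nonneg _) (by positivity)
              rcases hf01 j ω with h0 | h0 <;> simp [h0]
          _ = (j:ℝ)*K := mul_one _
      have := (hDint j).bdd_mul (((hPsm j).mul (hfsm j)).aestronglyMeasurable) (c := (j:ℝ)*K) (Filter.Eventually.of_forall hb)
      exact this.congr (Filter.Eventually.of_forall fun ω => by
        simp only [Pi.mul_apply]; ring)
    have hsecond_bd : ∀ ω, |X (d j) ω * (f j ω * h j ω)| ≤ K := by
      intro ω
      rw [abs_mul]
      rcases hf01 j ω with h0 | h0
      · simp [h0]; positivity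
      rcases hh01 j ω with g0 | g0
      · simp [g0]; positivity
      · rw [h0, g0]
        have h3 := hXabs (d j) ω
        have h2 : V (d j) ω < K := (hf_one j ω).1 h0 j le_rfl
        simp only [mul_one, abs_one]
        linarith [abs_nonneg (X (d j) ω)]
    have hsecond_int : Integrable
        (fun ω => X (d j) ω * (f j ω * h j ω) * (X (d (j+1)) ω - X (d j) ω)) μ :=
      (hDint j).bdd_mul (((hXsm (d j)).mul ((hfsm j).mul (hhsm j))).aestronglyMeasurable)
        (c := K) (Filter.Eventually.of_forall (fun ω => by rw [Real.norm_eq_abs]; exact hsecond_bd ω))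
    have hsplit : ∀ ω, P j ω * W j ω
        = (X (d (j+1)) ω - X (d j) ω) * (P j ω * f j ω)
          - X (d j) ω * (f j ω * h j ω) * (X (d (j+1)) ω - X (d j) ω) := by
      intro ω
      have e2 : P j ω * (f j ω * h j ω) = X (d j) ω * (f j ω * h j ω) := by
        rcases hf01 j ω with h0 | h1
        · rw [h0]; ring
        rcases hh01 j ω with g0 | g1
        · rw [g0]; ring
        · have hPX : P j ω = X (d j) ω := by
            have he : P j ω = ∑ k ∈ Finset.range j, (X (d (k+1)) ω - X (d k) ω) := by
              rw [hP]
              refine Finset.sum_congr rfl fun k hk => ?_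
              simp only [hW]
              rw [hf_anti1 ω (Nat.succ_le_of_lt (Finset.mem_range.1 hk)) h1, one_mul]
            rw [he, Finset.sum_range_sub (f := fun k => X (d k) ω), hd, grid_zero, hX0 ω,
              sub_zero]
          rw [hPX]
      have e1 : W j ω = (f j ω - f j ω * h j ω) * (X (d (j+1)) ω - X (d j) ω) := by
        simp only [hW]
        rw [← hfh j ω]
      calc P j ω * W j ω
          = (X (d (j+1)) ω - X (d j) ω) * (P j ω * f j ω)
            - (P j ω * (f j ω * h j ω)) * (X (d (j+1)) ω - X (d j) ω) := by rw [e1]; ring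
        _ = _ := by rw [e2]
    have hzero : ∫ ω, (X (d (j+1)) ω - X (d j) ω) * (P j ω * f j ω) ∂μ = 0 := by
      refine mart_orth hX (grid_mono t n (Nat.le_succ j))
        ((hPsm𝒢 j).mul (hfsm𝒢 j)) (C := (j:ℝ)*K) fun ω => ?_
      rw [abs_mul]
      calc |P j ω| * |f j ω| ≤ ((j:ℝ)*K) * 1 := by
            refine mul_le_mul (hPbd j ω) ?_ (abs_nonneg _) (by positivity)
            rcases hf01 j ω with h0 | h0 <;> simp [h0]
        _ = (j:ℝ)*K := mul_one _
    have hPW : ∫ ω, P j ω * W j ω ∂μ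
        = - ∫ ω, X (d j) ω * (f j ω * h j ω) * (X (d (j+1)) ω - X (d j) ω) ∂μ := by
      rw [integral_congr_ae (Filter.Eventually.of_forall hsplit),
        integral_sub hfirst_int hsecond_int, hzero, zero_sub]
    have hPW_le : ∫ ω, P j ω * W j ω ∂μ
        ≤ K * ∫ ω, f j ω * h j ω * |X (d (j+1)) ω - X (d j) ω| ∂μ := by
      rw [hPW]
      have habs : - ∫ ω, X (d j) ω * (f j ω * h j ω) * (X (d (j+1)) ω - X (d j) ω) ∂μ
          ≤ ∫ ω, |X (d j) ω * (f j ω * h j ω) * (X (d (j+1)) ω - X (d j) ω)| ∂μ := by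
        refine (neg_le_abs _).trans ?_
        have := norm_integral_le_integral_norm
          (fun ω => X (d j) ω * (f j ω * h j ω) * (X (d (j+1)) ω - X (d j) ω)) (μ := μ)
        simpa only [Real.norm_eq_abs] using this
      refine habs.trans ?_
      rw [← integral_const_mul]
      refine integral_mono hsecond_int.abs
        ((hfhD_int j).const_mul K) fun ω => ?_
      rcases hf01 j ω with h0 | h0
      · simp [h0]
      rcases hh01 j ω with g0 | g0
      · simp [g0]
      · have h2 : V (d j) ω < K := (hf_one j ω).1 h0 j le_rfl
        have h3 := hXabs (d j) ω
        rw [h0, g0]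
        simp only [mul_one, one_mul]
        rw [abs_mul]
        exact mul_le_mul_of_nonneg_right (by linarith) (abs_nonneg _)
    calc ∫ ω, (W j ω^2 + 2 * (P j ω * W j ω)) ∂μ
        = ∫ ω, W j ω^2 ∂μ + 2 * ∫ ω, P j ω * W j ω ∂μ := by
          rw [integral_add (hW2int j) (hPWint.const_mul 2), integral_const_mul]
      _ ≤ ∫ ω, W j ω^2 ∂μ
          + 2*K * ∫ ω, f j ω * h j ω * |X (d (j+1)) ω - X (d j) ω| ∂μ := by
          have h2 : (2:ℝ) * ∫ ω, P j ω * W j ω ∂μ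
              ≤ 2 * (K * ∫ ω, f j ω * h j ω * |X (d (j+1)) ω - X (d j) ω| ∂μ) :=
            mul_le_mul_of_nonneg_left hPW_le (by norm_num)
          linarith

  -- extra indicator facts
  have hχ01 : ∀ ω, χ ω = 0 ∨ χ ω = 1 := fun ω => by
    simp only [hχ]; split_ifs <;> simp
  have hfd01 : ∀ (j : ℕ) ω, f j ω - f (j+1) ω = f j ω * h j ω := fun j ω => by
    rw [hfh j ω]; ring
  have hfh01 : ∀ (j : ℕ) ω, f j ω * h j ω = 0 ∨ f j ω * h j ω = 1 := by
    intro j ω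
    rcases hf01 j ω with h0 | h0 <;> rcases hh01 j ω with g0 | g0 <;> simp [h0, g0]
  have hfh_one : ∀ (j : ℕ) ω, f j ω * h j ω = 1 → f j ω = 1 ∧ h j ω = 1 := by
    intro j ω h1
    rcases hf01 j ω with h0 | h0 <;> rcases hh01 j ω with g0 | g0 <;>
      simp [h0, g0] at h1 ⊢
  -- diagonal estimate
  have hsumfV : ∀ ω (r : ℕ),
      (f r ω = 1 → ∑ j ∈ Finset.range r, f (j+1) ω * (V (d (j+1)) ω - V (d j) ω) = V (d r) ω)
      ∧ ∑ j ∈ Finset.range r, f (j+1) ω * (V (d (j+1)) ω - V (d j) ω) ≤ K := by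
    intro ω r
    induction r with
    | zero =>
        constructor
        · intro _
          simp [hd, grid_zero, hV0 ω]
        · simpa using hK.le
    | succ r ih =>
        rcases hf01 (r+1) ω with h0 | h1
        · constructor
          · intro hc; rw [hc] at h0; norm_num at h0
          · rw [Finset.sum_range_succ, h0, zero_mul, add_zero]; exact ih.2
        · have hfr : f r ω = 1 := hf_anti1 ω (Nat.le_succ r) h1
          have he : ∑ j ∈ Finset.range (r+1), f (j+1) ω * (V (d (j+1)) ω - V (d j) ω)
              = V (d (r+1)) ω := by
            rw [Finset.sum_range_succ, ih.1 hfr, h1, one_mul]; ring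
          refine ⟨fun _ => he, ?_⟩
          rw [he]
          exact ((hf_one (r+1) ω).1 h1 (r+1) le_rfl).le
  have hMAnn : ∀ ω, 0 ≤ MA ω := fun ω => by rw [hMA]; exact maxAbs_nonneg _ _
  have hdiag_path : ∀ ω, ∑ j ∈ Finset.range n, W j ω^2 ≤ min K (MA ω) * K := by
    intro ω
    have hminnn : 0 ≤ min K (MA ω) := le_min hK.le (hMAnn ω)
    calc ∑ j ∈ Finset.range n, W j ω^2
        ≤ ∑ j ∈ Finset.range n, min K (MA ω) * (f (j+1) ω * (V (d (j+1)) ω - V (d j) ω)) := by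
          refine Finset.sum_le_sum fun j hj => ?_
          rcases hf01 (j+1) ω with h0 | h1
          · simp only [hW]
            rw [h0]
            simp
          · have hw : W j ω = X (d (j+1)) ω - X (d j) ω := by
              simp only [hW]; rw [h1, one_mul]
            have hDle : |X (d (j+1)) ω - X (d j) ω| ≤ min K (MA ω) := by
              refine le_min ?_ ?_
              · have := hWbd j ω
                rwa [hw] at this
              · rw [hMA]
                exact le_maxAbs (fun k => X (d k) ω) (Finset.mem_range.1 hj)
            rw [hw, h1, one_mul, sq, ← abs_mul_abs_self]
            exact mul_le_mul hDle (hDV j ω) (abs_nonneg _) hminnn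
      _ = min K (MA ω) * ∑ j ∈ Finset.range n, f (j+1) ω * (V (d (j+1)) ω - V (d j) ω) :=
          (Finset.mul_sum _ _ _).symm
      _ ≤ min K (MA ω) * K := mul_le_mul_of_nonneg_left (hsumfV ω n).2 hminnn
  have hminK_int : Integrable (fun ω => min K (MA ω)) μ := by
    refine bddInt ((measurable_const.min hMAsm.measurable).stronglyMeasurable).aestronglyMeasurable
      (C := K) fun ω => ?_
    rw [abs_of_nonneg (le_min hK.le (hMAnn ω))]
    exact min_le_left _ _
  have hminQ_int : Integrable (fun ω => min Q (MA ω)) μ := by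
    refine bddInt ((measurable_const.min hMAsm.measurable).stronglyMeasurable).aestronglyMeasurable
      (C := Q) fun ω => ?_
    rw [abs_of_nonneg (le_min hQ (hMAnn ω))]
    exact min_le_left _ _
  have hdiag : ∑ j ∈ Finset.range n, ∫ ω, W j ω^2 ∂μ ≤ K * ∫ ω, min K (MA ω) ∂μ := by
    rw [← integral_finset_sum _ (fun j _ => hW2int j)]
    calc ∫ ω, ∑ j ∈ Finset.range n, W j ω^2 ∂μ
        ≤ ∫ ω, min K (MA ω) * K ∂μ :=
          integral_mono (integrable_finset_sum _ fun j _ => hW2int j)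
            (hminK_int.mul_const K) hdiag_path
      _ = K * ∫ ω, min K (MA ω) ∂μ := by rw [integral_mul_const]; ring
  -- residual estimate
  have hKXt_int : Integrable (fun ω => K + |X t ω|) μ := (integrable_const K).add hXtint.abs
  have hχKXt_int : Integrable (fun ω => χ ω * (K + |X t ω|)) μ := by
    refine hKXt_int.bdd_mul hχsm.aestronglyMeasurable (c := 1) (Filter.Eventually.of_forall (fun ω => ?_))
    rcases hχ01 ω with h0 | h0 <;> simp [h0]
  have hχKXt_nn : ∀ ω, 0 ≤ χ ω * (K + |X t ω|) := by
    intro ω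
    rcases hχ01 ω with h0 | h0 <;> rw [h0]
    · simp
    · rw [one_mul]; positivity
  have hminQ_nn : ∀ ω, 0 ≤ min Q (MA ω) := fun ω => le_min hQ (hMAnn ω)
  have hresid : ∀ j, j < n → ∫ ω, f j ω * h j ω * |X (d (j+1)) ω - X (d j) ω| ∂μ
      ≤ ∫ ω, (f j ω - f (j+1) ω) * min Q (MA ω) ∂μ
        + ∫ ω, (f j ω - f (j+1) ω) * (χ ω * (K + |X t ω|)) ∂μ := by
    intro j hj
    have hfd_bd : ∀ ω, ‖f j ω - f (j+1) ω‖ ≤ 1 := by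
      intro ω
      rw [Real.norm_eq_abs, hfd01 j ω]
      rcases hfh01 j ω with h0 | h0 <;> simp [h0]
    have hint1 : Integrable (fun ω => (f j ω - f (j+1) ω) * min Q (MA ω)) μ :=
      hminQ_int.bdd_mul (((hfsm j).sub (hfsm (j+1))).aestronglyMeasurable) (c := 1) (Filter.Eventually.of_forall hfd_bd)
    have hint2 : Integrable (fun ω => (f j ω - f (j+1) ω) * (χ ω * (K + |X t ω|))) μ :=
      hχKXt_int.bdd_mul (((hfsm j).sub (hfsm (j+1))).aestronglyMeasurable) (c := 1) (Filter.Eventually.of_forall hfd_bd)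
    have ha01 : ∀ ω, f j ω * h j ω * q j ω = 0 ∨ f j ω * h j ω * q j ω = 1 := by
      intro ω
      rcases hfh01 j ω with h0 | h0 <;> rcases hq01 j ω with g0 | g0 <;> simp [h0, g0]
    have ha_bd : ∀ ω, ‖f j ω * h j ω * q j ω‖ ≤ 1 := by
      intro ω
      rw [Real.norm_eq_abs]
      rcases ha01 ω with h0 | h0 <;> simp [h0]
    have hasm : StronglyMeasurable (fun ω => f j ω * h j ω * q j ω) :=
      ((hfsm j).mul (hhsm j)).mul (hqsm j)
    have hint3 : Integrable (fun ω => f j ω * h j ω * q j ω * (K + |X (d (j+1)) ω|)) μ :=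
      ((integrable_const K).add (hX.integrable (d (j+1))).abs).bdd_mul
        hasm.aestronglyMeasurable (c := 1) (Filter.Eventually.of_forall ha_bd)
    have hpath : ∀ ω, f j ω * h j ω * |X (d (j+1)) ω - X (d j) ω|
        ≤ (f j ω - f (j+1) ω) * min Q (MA ω)
          + f j ω * h j ω * q j ω * (K + |X (d (j+1)) ω|) := by
      intro ω
      rw [hfd01 j ω]
      rcases hfh01 j ω with h0 | h1
      · rw [h0]; simp
      · rw [h1]
        obtain ⟨hf1, hh1⟩ := hfh_one j ω h1
        rcases hq01 j ω with q0 | q1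
        · rw [q0]
          have hVle : V (d (j+1)) ω ≤ Q := by
            by_contra hc
            push_neg at hc
            simp only [hq] at q0
            rw [if_pos hc] at q0
            norm_num at q0
          have hD1 : |X (d (j+1)) ω - X (d j) ω| ≤ Q := by
            have h2 := hDV j ω
            have h3 := hVnn (d j) ω
            linarith
          have hD2 : |X (d (j+1)) ω - X (d j) ω| ≤ MA ω := by
            rw [hMA]; exact le_maxAbs (fun k => X (d k) ω) hj
          have : |X (d (j+1)) ω - X (d j) ω| ≤ min Q (MA ω) := le_min hD1 hD2
          simp only [one_mul, mul_zero, zero_mul, add_zero]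
          linarith
        · rw [q1]
          have h2 : V (d j) ω < K := (hf_one j ω).1 hf1 j le_rfl
          have h3 := hXabs (d j) ω
          have h4 : |X (d (j+1)) ω - X (d j) ω| ≤ |X (d (j+1)) ω| + |X (d j) ω| :=
            abs_sub _ _
          have h5 := hminQ_nn ω
          simp only [one_mul, mul_one]
          linarith
    have hstep1 : ∫ ω, f j ω * h j ω * |X (d (j+1)) ω - X (d j) ω| ∂μ
        ≤ ∫ ω, (f j ω - f (j+1) ω) * min Q (MA ω) ∂μ
          + ∫ ω, f j ω * h j ω * q j ω * (K + |X (d (j+1)) ω|) ∂μ := by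
      rw [← integral_add hint1 hint3]
      exact integral_mono (hfhD_int j) (hint1.add hint3) hpath
    have hstep2 : ∫ ω, f j ω * h j ω * q j ω * (K + |X (d (j+1)) ω|) ∂μ
        ≤ ∫ ω, (f j ω - f (j+1) ω) * (χ ω * (K + |X t ω|)) ∂μ := by
      have ha_nn : ∀ ω, 0 ≤ f j ω * h j ω * q j ω := by
        intro ω; rcases ha01 ω with h0 | h0 <;> rw [h0] <;> norm_num
      have ha_le1 : ∀ ω, f j ω * h j ω * q j ω ≤ 1 := by
        intro ω; rcases ha01 ω with h0 | h0 <;> rw [h0] <;> norm_num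
      have hasm𝒢 : StronglyMeasurable[𝒢 (d (j+1))] (fun ω => f j ω * h j ω * q j ω) :=
        (((hfsm𝒢 j).mono (𝒢.mono (grid_mono t n (Nat.le_succ j)))).mul (hhsm𝒢 j)).mul (hqsm𝒢 j)
      have hdjt : d (j+1) ≤ t := grid_le t hn (Nat.succ_le_of_lt hj)
      have hmart_step := mart_abs_le hX hdjt hasm𝒢 ha_nn ha_le1
      have haK_int : Integrable (fun ω => f j ω * h j ω * q j ω * K) μ := by
        refine bddInt (hasm.mul_const K).aestronglyMeasurable (C := K) fun ω => ?_
        rcases ha01 ω with h0 | h0 <;> rw [h0]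
        · simp; positivity
        · rw [one_mul, abs_of_pos hK]
      have haX1_int : Integrable (fun ω => f j ω * h j ω * q j ω * |X (d (j+1)) ω|) μ :=
        (hX.integrable (d (j+1))).abs.bdd_mul hasm.aestronglyMeasurable (c := 1) (Filter.Eventually.of_forall ha_bd)
      have haXt_int : Integrable (fun ω => f j ω * h j ω * q j ω * |X t ω|) μ :=
        hXtint.abs.bdd_mul hasm.aestronglyMeasurable (c := 1) (Filter.Eventually.of_forall ha_bd)
      calc ∫ ω, f j ω * h j ω * q j ω * (K + |X (d (j+1)) ω|) ∂μ
          = ∫ ω, f j ω * h j ω * q j ω * K ∂μ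
            + ∫ ω, f j ω * h j ω * q j ω * |X (d (j+1)) ω| ∂μ := by
            rw [← integral_add haK_int haX1_int]
            exact integral_congr_ae (Filter.Eventually.of_forall fun ω => by ring)
        _ ≤ ∫ ω, f j ω * h j ω * q j ω * K ∂μ
            + ∫ ω, f j ω * h j ω * q j ω * |X t ω| ∂μ := by
            exact add_le_add (le_refl _) hmart_step
        _ = ∫ ω, f j ω * h j ω * q j ω * (K + |X t ω|) ∂μ := by
            rw [← integral_add haK_int haXt_int]
            exact integral_congr_ae (Filter.Eventually.of_forall fun ω => by ring)
        _ ≤ ∫ ω, (f j ω - f (j+1) ω) * (χ ω * (K + |X t ω|)) ∂μ := by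
            refine integral_mono
              (hKXt_int.bdd_mul hasm.aestronglyMeasurable (c := 1) (Filter.Eventually.of_forall ha_bd)) hint2 fun ω => ?_
            rw [hfd01 j ω]
            rcases ha01 ω with h0 | h1'
            · rw [h0, zero_mul]
              rcases hfh01 j ω with g0 | g0 <;> rw [g0]
              · simp
              · rw [one_mul]; exact hχKXt_nn ω
            · rw [h1']
              obtain ⟨hfh1, hq1⟩ : f j ω * h j ω = 1 ∧ q j ω = 1 := by
                rcases hfh01 j ω with g0 | g0 <;> rcases hq01 j ω with p0 | p0 <;>
                  rw [g0, p0] at h1' ⊢ <;> norm_num at h1' <;> norm_num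
              have hχ1 : χ ω = 1 := by
                have hQV : Q < V (d (j+1)) ω := by
                  by_contra hc
                  simp only [hq] at hq1
                  rw [if_neg hc] at hq1
                  norm_num at hq1
                have : Q < V t ω :=
                  lt_of_lt_of_le hQV (hVmono ω (grid_le t hn (Nat.succ_le_of_lt hj)))
                simp only [hχ]
                rw [if_pos this]
              rw [hfh1, hχ1, one_mul, one_mul]
      -- end hstep2
    calc ∫ ω, f j ω * h j ω * |X (d (j+1)) ω - X (d j) ω| ∂μ
        ≤ ∫ ω, (f j ω - f (j+1) ω) * min Q (MA ω) ∂μ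
          + ∫ ω, f j ω * h j ω * q j ω * (K + |X (d (j+1)) ω|) ∂μ := hstep1
      _ ≤ _ := add_le_add (le_refl _) hstep2
  -- telescoping bound
  have htele : ∀ (c : Ω → ℝ), Integrable c μ → (∀ ω, 0 ≤ c ω) →
      (∀ j : ℕ, Integrable (fun ω => (f j ω - f (j+1) ω) * c ω) μ) →
      ∑ j ∈ Finset.range n, ∫ ω, (f j ω - f (j+1) ω) * c ω ∂μ ≤ ∫ ω, c ω ∂μ := by
    intro c hcint hcnn hterm
    rw [← integral_finset_sum _ fun j _ => hterm j]
    refine integral_mono (integrable_finset_sum _ fun j _ => hterm j) hcint fun ω => ?_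
    have he : ∑ j ∈ Finset.range n, (f j ω - f (j+1) ω) * c ω
        = (f 0 ω - f n ω) * c ω := by
      rw [← Finset.sum_mul, Finset.sum_range_sub' (f := fun j => f j ω)]
    simp only []
    rw [he]
    calc (f 0 ω - f n ω) * c ω ≤ 1 * c ω := by
          refine mul_le_mul_of_nonneg_right ?_ (hcnn ω)
          have h1 := hf_le1 0 ω
          have h2 := hf_nn n ω
          linarith
      _ = c ω := one_mul _
  -- left-hand side comparison
  have key1 : ∀ ω, (if V t ω < K then (1:ℝ) else 0) * (X t ω)^2 ≤ (P n ω)^2 := by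
    intro ω
    by_cases hc : V t ω < K
    · rw [if_pos hc, one_mul]
      have hPn : P n ω = X t ω := by
        have hfall : ∀ k, k < n → f (k+1) ω = 1 := by
          intro k hk
          rw [hf_one]
          intro j hj
          have hjle : j ≤ n := hj.trans (Nat.succ_le_of_lt hk)
          exact lt_of_le_of_lt (hVmono ω (grid_le t hn hjle)) hc
        have he : P n ω = ∑ k ∈ Finset.range n, (X (d (k+1)) ω - X (d k) ω) := by
          rw [hP]
          refine Finset.sum_congr rfl fun k hk => ?_
          simp only [hW]
          rw [hfall k (Finset.mem_range.1 hk), one_mul]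
        rw [he, Finset.sum_range_sub (f := fun k => X (d k) ω), hd, grid_zero,
          grid_last t hn, hX0 ω, sub_zero]
      rw [hPn]
    · rw [if_neg hc, zero_mul]
      exact sq_nonneg _
  have hPn2int : Integrable (fun ω => P n ω ^ 2) μ := by
    refine bddInt ((hPsm n).measurable.pow_const 2).stronglyMeasurable.aestronglyMeasurable
      (C := ((n:ℝ)*K)^2) fun ω => ?_
    rw [abs_of_nonneg (sq_nonneg _), ← sq_abs]
    exact pow_le_pow_left₀ (abs_nonneg _) (hPbd n ω) 2
  have hind_int : Integrable (fun ω => (if V t ω < K then (1:ℝ) else 0) * (X t ω)^2) μ := by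
    have hsm : StronglyMeasurable (fun ω => (if V t ω < K then (1:ℝ) else 0)) := by
      have he : (fun ω => (if V t ω < K then (1:ℝ) else 0))
          = Set.indicator {ω | V t ω < K} (fun _ => (1:ℝ)) := by
        funext ω
        by_cases hc : V t ω < K <;> simp [hc, Set.indicator_apply]
      rw [he]
      exact stronglyMeasurable_const.indicator
        (measurableSet_lt (hVsm t).measurable measurable_const)
    refine bddInt (hsm.mul ((hXsm t).measurable.pow_const 2).stronglyMeasurable).aestronglyMeasurable
      (C := K^2) fun ω => ?_
    by_cases hc : V t ω < K
    · rw [if_pos hc, one_mul, abs_of_nonneg (sq_nonneg _), ← sq_abs]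
      refine pow_le_pow_left₀ (abs_nonneg _) ?_ 2
      exact (hXabs t ω).trans hc.le
    · rw [if_neg hc, zero_mul, abs_zero]
      positivity
  -- final assembly
  have hWPint : ∀ j : ℕ, Integrable (fun ω => W j ω^2 + 2*((P j ω) * W j ω)) μ := by
    intro j
    refine (hW2int j).add ?_
    have : Integrable (fun ω => P j ω * W j ω) μ := by
      refine bddInt ((hPsm j).mul (hWsm j)).aestronglyMeasurable (C := ((j:ℝ)*K)*K) fun ω => ?_
      rw [abs_mul]
      exact mul_le_mul (hPbd j ω) (hWbd j ω) (abs_nonneg _) (by positivity)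
    exact this.const_mul 2
  calc ∫ ω, (if V t ω < K then (1:ℝ) else 0) * (X t ω)^2 ∂μ
      ≤ ∫ ω, P n ω ^ 2 ∂μ := integral_mono hind_int hPn2int key1
    _ = ∑ j ∈ Finset.range n, ∫ ω, (W j ω^2 + 2*((P j ω) * W j ω)) ∂μ := by
        rw [← integral_finset_sum _ (fun j _ => hWPint j)]
        refine integral_congr_ae (Filter.Eventually.of_forall fun ω => ?_)
        simp only [hP]
        exact sq_sum_expand (fun k => W k ω) n
    _ ≤ ∑ j ∈ Finset.range n, (∫ ω, W j ω^2 ∂μ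
          + 2*K * ∫ ω, f j ω * h j ω * |X (d (j+1)) ω - X (d j) ω| ∂μ) :=
        Finset.sum_le_sum fun j hj => step_j j (Finset.mem_range.1 hj)
    _ = (∑ j ∈ Finset.range n, ∫ ω, W j ω^2 ∂μ)
          + 2*K * ∑ j ∈ Finset.range n, ∫ ω, f j ω * h j ω * |X (d (j+1)) ω - X (d j) ω| ∂μ := by
        rw [Finset.sum_add_distrib, Finset.mul_sum]
    _ ≤ K * ∫ ω, min K (MA ω) ∂μ
          + 2*K * ((∫ ω, min Q (MA ω) ∂μ) + ∫ ω, χ ω * (K + |X t ω|) ∂μ) := by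
        refine add_le_add hdiag ?_
        refine mul_le_mul_of_nonneg_left ?_ (by positivity)
        have hterm1 : ∀ j : ℕ, Integrable (fun ω => (f j ω - f (j+1) ω) * min Q (MA ω)) μ := by
          intro j
          refine hminQ_int.bdd_mul (((hfsm j).sub (hfsm (j+1))).aestronglyMeasurable)
            (c := 1) (Filter.Eventually.of_forall (fun ω => ?_))
          rw [Real.norm_eq_abs, hfd01 j ω]
          rcases hfh01 j ω with h0 | h0 <;> simp [h0]
        have hterm2 : ∀ j : ℕ,
            Integrable (fun ω => (f j ω - f (j+1) ω) * (χ ω * (K + |X t ω|))) μ := by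
          intro j
          refine hχKXt_int.bdd_mul (((hfsm j).sub (hfsm (j+1))).aestronglyMeasurable)
            (c := 1) (Filter.Eventually.of_forall (fun ω => ?_))
          rw [Real.norm_eq_abs, hfd01 j ω]
          rcases hfh01 j ω with h0 | h0 <;> simp [h0]
        calc ∑ j ∈ Finset.range n, ∫ ω, f j ω * h j ω * |X (d (j+1)) ω - X (d j) ω| ∂μ
            ≤ ∑ j ∈ Finset.range n, (∫ ω, (f j ω - f (j+1) ω) * min Q (MA ω) ∂μ
                + ∫ ω, (f j ω - f (j+1) ω) * (χ ω * (K + |X t ω|)) ∂μ) :=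
              Finset.sum_le_sum fun j hj => hresid j (Finset.mem_range.1 hj)
          _ = (∑ j ∈ Finset.range n, ∫ ω, (f j ω - f (j+1) ω) * min Q (MA ω) ∂μ)
                + ∑ j ∈ Finset.range n, ∫ ω, (f j ω - f (j+1) ω) * (χ ω * (K + |X t ω|)) ∂μ :=
              Finset.sum_add_distrib
          _ ≤ (∫ ω, min Q (MA ω) ∂μ) + ∫ ω, χ ω * (K + |X t ω|) ∂μ :=
              add_le_add (htele _ hminQ_int hminQ_nn hterm1)
                (htele _ hχKXt_int hχKXt_nn hterm2)
    _ = K * (∫ ω, min K (maxAbs (fun k => X (d k) ω) n) ∂μ)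
          + 2*K * ((∫ ω, min Q (maxAbs (fun k => X (d k) ω) n) ∂μ)
            + ∫ ω, (if Q < V t ω then 1 else 0) * (K + |X t ω|) ∂μ) := by
        simp only [hMA, hχ]





lemma per_t {X V : ℝ≥0 → Ω → ℝ}
    (hX : Martingale X 𝒢 μ)
    (hVad : ∀ s, StronglyMeasurable[𝒢 s] (V s))
    (hV0 : ∀ ω, V 0 ω = 0)
    (hVmono : ∀ ω, Monotone fun s => V s ω)
    (hX0 : ∀ ω, X 0 ω = 0)
    (hXV : ∀ (ω : Ω) {s u : ℝ≥0}, s ≤ u → |X u ω - X s ω| ≤ V u ω - V s ω)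
    (hXcont : ∀ ω, Continuous fun s => X s ω)
    (t : ℝ≥0) : ∀ᵐ ω ∂μ, X t ω = 0 := by
  have hXsm : ∀ s : ℝ≥0, StronglyMeasurable (X s) := fun s => (hX.stronglyAdapted s).mono (𝒢.le s)
  have hVsm : ∀ s : ℝ≥0, StronglyMeasurable (V s) := fun s => (hVad s).mono (𝒢.le s)
  have hVnn : ∀ (s : ℝ≥0) ω, 0 ≤ V s ω := fun s ω => by
    simpa [hV0 ω] using hVmono ω (zero_le : (0:ℝ≥0) ≤ s)
  have hXabs : ∀ (s : ℝ≥0) ω, |X s ω| ≤ V s ω := fun s ω => by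
    have := hXV ω (zero_le : (0:ℝ≥0) ≤ s); rw [hX0 ω, hV0 ω, sub_zero, sub_zero] at this; exact this
  have hXtint : Integrable (X t) μ := hX.integrable t
  -- measurability of the maxAbs integrands
  have hMAmeas : ∀ n : ℕ, Measurable (fun ω => maxAbs (fun k => X (grid t n k) ω) n) :=
    fun n => measurable_maxAbs (fun k => (hXsm (grid t n k)).measurable) n
  have hMAnn : ∀ (n : ℕ) ω, 0 ≤ maxAbs (fun k => X (grid t n k) ω) n :=
    fun n ω => maxAbs_nonneg _ _
  have hMAlim : ∀ ω, Tendsto (fun n => maxAbs (fun k => X (grid t n k) ω) n) atTop (𝓝 0) :=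
    fun ω => tendsto_maxAbs_grid (hXcont ω) t
  -- generic bounded-convergence for min c (maxAbs ...)
  have hminlim : ∀ c : ℝ, 0 ≤ c →
      Tendsto (fun n : ℕ => ∫ ω, min c (maxAbs (fun k => X (grid t n k) ω) n) ∂μ)
        atTop (𝓝 0) := by
    intro c hc
    have key := tendsto_integral_of_dominated_convergence
      (F := fun (n:ℕ) ω => min c (maxAbs (fun k => X (grid t n k) ω) n))
      (f := fun _ => (0:ℝ)) (bound := fun _ => c) (μ := μ)
      (fun n => (measurable_const.min (hMAmeas n)).aestronglyMeasurable)
      (integrable_const c) ?_ ?_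
    · simpa using key
    · refine fun n => Filter.Eventually.of_forall fun ω => ?_
      rw [Real.norm_eq_abs, abs_of_nonneg (le_min hc (hMAnn n ω))]
      exact min_le_left _ _
    · refine Filter.Eventually.of_forall fun ω => ?_
      have := Tendsto.min (tendsto_const_nhds (x := c)) (hMAlim ω)
      rwa [min_eq_right hc] at this
  -- per K : vanishing on {V t < K}
  have hK_step : ∀ k : ℕ, ∀ᵐ ω ∂μ, V t ω < (k:ℝ)+1 → X t ω = 0 := by
    intro k
    set K : ℝ := (k:ℝ)+1 with hKdef
    have hK : 0 < K := by positivity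
    have hind_int : Integrable (fun ω => (if V t ω < K then (1:ℝ) else 0) * (X t ω)^2) μ := by
      have hsm : StronglyMeasurable (fun ω => (if V t ω < K then (1:ℝ) else 0)) := by
        have he : (fun ω => (if V t ω < K then (1:ℝ) else 0))
            = Set.indicator {ω | V t ω < K} (fun _ => (1:ℝ)) := by
          funext ω
          by_cases hc : V t ω < K <;> simp [hc, Set.indicator_apply]
        rw [he]
        exact stronglyMeasurable_const.indicator
          (measurableSet_lt (hVsm t).measurable measurable_const)
      refine bddInt
        (hsm.mul ((hXsm t).measurable.pow_const 2).stronglyMeasurable).aestronglyMeasurable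
        (C := K^2) fun ω => ?_
      by_cases hc : V t ω < K
      · rw [if_pos hc, one_mul, abs_of_nonneg (sq_nonneg _), ← sq_abs]
        exact pow_le_pow_left₀ (abs_nonneg _) ((hXabs t ω).trans hc.le) 2
      · rw [if_neg hc, zero_mul, abs_zero]
        positivity
    have hC : ∀ p : ℕ, ∫ ω, (if (p:ℝ) < V t ω then 1 else 0) * (K + |X t ω|) ∂μ
        = ∫ ω, (if (p:ℝ) < V t ω then 1 else 0) * (K + |X t ω|) ∂μ := fun _ => rfl
    -- the tail integral tends to zero
    have hCmeas : ∀ p : ℕ, AEStronglyMeasurable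
        (fun ω => (if (p:ℝ) < V t ω then (1:ℝ) else 0) * (K + |X t ω|)) μ := by
      intro p
      have hsm : StronglyMeasurable (fun ω => (if (p:ℝ) < V t ω then (1:ℝ) else 0)) := by
        have he : (fun ω => (if (p:ℝ) < V t ω then (1:ℝ) else 0))
            = Set.indicator {ω | (p:ℝ) < V t ω} (fun _ => (1:ℝ)) := by
          funext ω
          by_cases hc : (p:ℝ) < V t ω <;> simp [hc, Set.indicator_apply]
        rw [he]
        exact stronglyMeasurable_const.indicator
          (measurableSet_lt measurable_const (hVsm t).measurable)
      exact (hsm.mul (stronglyMeasurable_const.add ((hXsm t).measurable.abs).stronglyMeasurable)).aestronglyMeasurable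
    have htail : Tendsto
        (fun p : ℕ => ∫ ω, (if (p:ℝ) < V t ω then (1:ℝ) else 0) * (K + |X t ω|) ∂μ)
        atTop (𝓝 0) := by
      have key := tendsto_integral_of_dominated_convergence
        (F := fun (p:ℕ) ω => (if (p:ℝ) < V t ω then (1:ℝ) else 0) * (K + |X t ω|))
        (f := fun _ => (0:ℝ)) (bound := fun ω => K + |X t ω|) (μ := μ)
        hCmeas ((integrable_const K).add hXtint.abs) ?_ ?_
      · simpa using key
      · refine fun p => Filter.Eventually.of_forall fun ω => ?_
        show ‖(if (p:ℝ) < V t ω then (1:ℝ) else 0) * (K + |X t ω|)‖ ≤ K + |X t ω|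
        rw [Real.norm_eq_abs]
        by_cases hc : (p:ℝ) < V t ω
        · rw [if_pos hc, one_mul, abs_of_nonneg (by positivity)]
        · rw [if_neg hc, zero_mul, abs_zero]; positivity
      · refine Filter.Eventually.of_forall fun ω => ?_
        show Tendsto (fun p : ℕ => (if (p:ℝ) < V t ω then (1:ℝ) else 0) * (K + |X t ω|))
          atTop (𝓝 0)
        refine tendsto_const_nhds.congr' ?_
        rw [Filter.EventuallyEq, eventually_atTop]
        refine ⟨⌈V t ω⌉₊, fun p hp => ?_⟩
        have : ¬ ((p:ℝ) < V t ω) := by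
          push_neg
          calc V t ω ≤ (⌈V t ω⌉₊ : ℝ) := Nat.le_ceil _
            _ ≤ (p:ℝ) := by exact_mod_cast hp
        rw [if_neg this, zero_mul]
    -- fixed p : pass n → ∞
    have hfix : ∀ p : ℕ, ∫ ω, (if V t ω < K then (1:ℝ) else 0) * (X t ω)^2 ∂μ
        ≤ 2*K * ∫ ω, (if (p:ℝ) < V t ω then (1:ℝ) else 0) * (K + |X t ω|) ∂μ := by
      intro p
      set Cp : ℝ := ∫ ω, (if (p:ℝ) < V t ω then (1:ℝ) else 0) * (K + |X t ω|) ∂μ with hCp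
      have hlimR : Tendsto (fun n : ℕ =>
          K * (∫ ω, min K (maxAbs (fun k => X (grid t n k) ω) n) ∂μ)
          + 2*K * ((∫ ω, min (p:ℝ) (maxAbs (fun k => X (grid t n k) ω) n) ∂μ) + Cp))
          atTop (𝓝 (K * 0 + 2*K * (0 + Cp))) := by
        exact ((tendsto_const_nhds.mul (hminlim K hK.le)).add
          (tendsto_const_nhds.mul ((hminlim (p:ℝ) (Nat.cast_nonneg p)).add tendsto_const_nhds)))
      have hlimR' : Tendsto (fun n : ℕ =>
          K * (∫ ω, min K (maxAbs (fun k => X (grid t n k) ω) n) ∂μ)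
          + 2*K * ((∫ ω, min (p:ℝ) (maxAbs (fun k => X (grid t n k) ω) n) ∂μ) + Cp))
          atTop (𝓝 (2*K*Cp)) := by
        have : K * 0 + 2*K * (0 + Cp) = 2*K*Cp := by ring
        rwa [this] at hlimR
      refine ge_of_tendsto hlimR' ?_
      rw [eventually_atTop]
      exact ⟨1, fun n hn =>
        core hX hVad hV0 hVmono hX0 hXV t hK (Nat.cast_nonneg p) (Nat.lt_of_lt_of_le zero_lt_one hn)⟩
    have hle0 : ∫ ω, (if V t ω < K then (1:ℝ) else 0) * (X t ω)^2 ∂μ ≤ 0 := by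
      have hlim2 : Tendsto (fun p : ℕ =>
          2*K * ∫ ω, (if (p:ℝ) < V t ω then (1:ℝ) else 0) * (K + |X t ω|) ∂μ)
          atTop (𝓝 0) := by
        have := tendsto_const_nhds (x := 2*K) |>.mul htail
        simpa using this
      exact ge_of_tendsto hlim2 (Filter.Eventually.of_forall hfix)
    have hnn : ∀ ω, 0 ≤ (if V t ω < K then (1:ℝ) else 0) * (X t ω)^2 := by
      intro ω
      by_cases hc : V t ω < K
      · rw [if_pos hc, one_mul]; exact sq_nonneg _
      · rw [if_neg hc, zero_mul]
    have heq0 : ∫ ω, (if V t ω < K then (1:ℝ) else 0) * (X t ω)^2 ∂μ = 0 :=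
      le_antisymm hle0 (integral_nonneg hnn)
    have hae := (integral_eq_zero_iff_of_nonneg hnn hind_int).1 heq0
    filter_upwards [hae] with ω hω hVK
    have h1 : (if V t ω < K then (1:ℝ) else 0) * (X t ω)^2 = 0 := hω
    rw [if_pos hVK, one_mul] at h1
    exact pow_eq_zero_iff (by norm_num) |>.1 h1
  have hall : ∀ᵐ ω ∂μ, ∀ k : ℕ, V t ω < (k:ℝ)+1 → X t ω = 0 := by
    rw [ae_all_iff]
    exact hK_step
  filter_upwards [hall] with ω hω
  obtain ⟨k, hk⟩ := exists_nat_gt (V t ω)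
  exact hω k (by push_cast; linarith)



end Aux


/-- a continuous martingale which is a difference of two continuous
nondecreasing adapted processes starting at `0` is identically `0`; i.e. the two
processes coincide almost surely. -/
theorem stmt12 {Ω : Type*} {m : MeasurableSpace Ω} {μ : Measure Ω}
    [IsProbabilityMeasure μ] (𝒢 : Filtration ℝ≥0 m)
    (M L : ℝ≥0 → Ω → ℝ)
    (hMc : ∀ ω, Continuous fun t => M t ω) (hLc : ∀ ω, Continuous fun t => L t ω)
    (hMad : Adapted 𝒢 M) (hLad : Adapted 𝒢 L)
    (hMmono : ∀ ω, Monotone fun t => M t ω) (hLmono : ∀ ω, Monotone fun t => L t ω)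
    (hM0 : ∀ ω, M 0 ω = 0) (hL0 : ∀ ω, L 0 ω = 0)
    (hmart : Martingale (fun t ω => M t ω - L t ω) 𝒢 μ) :
    ∀ᵐ ω ∂μ, ∀ t, M t ω = L t ω := by
  have hper : ∀ r : ℝ≥0, ∀ᵐ ω ∂μ, M r ω - L r ω = 0 := by
    intro r
    have := per_t (X := fun t ω => M t ω - L t ω) (V := fun t ω => M t ω + L t ω)
      (𝒢 := 𝒢) (μ := μ) hmart
      (fun s => ((hMad s).add (hLad s)).stronglyMeasurable)
      (fun ω => by show M 0 ω + L 0 ω = 0; rw [hM0 ω, hL0 ω]; ring)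
      (fun ω a b hab => add_le_add (hMmono ω hab) (hLmono ω hab))
      (fun ω => by show M 0 ω - L 0 ω = 0; rw [hM0 ω, hL0 ω]; ring)
      (fun ω {s u} hsu => by
        have h1 : M s ω ≤ M u ω := hMmono ω hsu
        have h2 : L s ω ≤ L u ω := hLmono ω hsu
        show |(M u ω - L u ω) - (M s ω - L s ω)| ≤ (M u ω + L u ω) - (M s ω + L s ω)
        rw [abs_le]
        constructor <;> linarith)
      (fun ω => (hMc ω).sub (hLc ω)) r
    exact this
  obtain ⟨s, hsc, hsd⟩ := TopologicalSpace.exists_countable_dense ℝ≥0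
  have hae : ∀ᵐ ω ∂μ, ∀ r ∈ s, M r ω - L r ω = 0 := (ae_ball_iff hsc).2 fun r _ => hper r
  filter_upwards [hae] with ω hω
  intro u
  have hcont : Continuous fun r : ℝ≥0 => M r ω - L r ω := (hMc ω).sub (hLc ω)
  have heq : (fun r : ℝ≥0 => M r ω - L r ω) = fun _ => 0 :=
    Continuous.ext_on hsd hcont continuous_const fun x hx => hω x hx
  have := congrFun heq u
  simpa [sub_eq_zero] using this
end
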